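/- Let X₁, X₂, ... be i.i.d. real random variables. For each n ≥ 2 let X_{n,1} be the element of {X_j : 2 ≤ j ≤ n} that is smallest among those that are ≥ X₁ (the nearest neighbor of X₁ to the right among X₂,...,Xₙ), with X_{n,1} := X₁ if no such element exists. Then X_{n,1} → X₁ almost surely as n → ∞. -/

import Mathlib

open MeasureTheory ProbabilityTheory Filter
open scoped ENNReal

/-- The set of points `x` such that some right interval `[x, y)` is `ν`-null is itself
`ν`-null. -/
lemma badset_eq_iUnion (ν : Measure ℝ) :
    {x : ℝ | ∃ y, x < y ∧ ν (Set.Ico x y) = 0}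
      = ⋃ q : ℚ, {x : ℝ | x < (q : ℝ) ∧ ν (Set.Ico x (q : ℝ)) = 0} := by
  ext x
  constructor
  · rintro ⟨y, hxy, hν⟩
    obtain ⟨q, hq1, hq2⟩ := exists_rat_btwn hxy
    exact Set.mem_iUnion.2
      ⟨q, hq1, measure_mono_null (Set.Ico_subset_Ico_right hq2.le) hν⟩
  · rintro hx
    obtain ⟨q, hq1, hq2⟩ := Set.mem_iUnion.1 hx
    exact ⟨(q : ℝ), hq1, hq2⟩

lemma badset_null (ν : Measure ℝ) :
    ν {x : ℝ | ∃ y, x < y ∧ ν (Set.Ico x y) = 0} = 0 := by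
  rw [badset_eq_iUnion]
  refine measure_iUnion_null fun q => ?_
  set Bq := {x : ℝ | x < (q : ℝ) ∧ ν (Set.Ico x (q : ℝ)) = 0} with hBq
  have hT : ν {x | x ∈ Bq ∧ ∀ y ∈ Bq, x ≤ y} = 0 := by
    rcases Set.eq_empty_or_nonempty {x | x ∈ Bq ∧ ∀ y ∈ Bq, x ≤ y} with h | ⟨x, hx⟩
    · simp [h]
    · refine measure_mono_null (fun y hy => ?_) hx.1.2
      exact ⟨hx.2 y hy.1, hy.1.1⟩
  have hU : ν (⋃ r : {r : ℚ // (r : ℝ) ∈ Bq}, Set.Ico (r.1 : ℝ) (q : ℝ)) = 0 :=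
    measure_iUnion_null fun r => r.2.2
  refine measure_mono_null (fun x hx => ?_) (measure_union_null hT hU)
  by_cases hmin : ∀ y ∈ Bq, x ≤ y
  · exact Or.inl ⟨hx, hmin⟩
  · push_neg at hmin
    obtain ⟨y, hyB, hyx⟩ := hmin
    obtain ⟨r, hr1, hr2⟩ := exists_rat_btwn hyx
    have hrB : (r : ℝ) ∈ Bq :=
      ⟨hr2.trans hx.1, measure_mono_null (Set.Ico_subset_Ico_left hr1.le) hyB.2⟩
    exact Or.inr (Set.mem_iUnion.2 ⟨⟨r, hrB⟩, hr2.le, hx.1⟩)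

lemma badset_meas (ν : Measure ℝ) :
    MeasurableSet {x : ℝ | ∃ y, x < y ∧ ν (Set.Ico x y) = 0} := by
  rw [badset_eq_iUnion]
  refine MeasurableSet.iUnion fun q => ?_
  refine Set.OrdConnected.measurableSet ⟨fun x hx y hy z hz => ?_⟩
  refine ⟨lt_of_le_of_lt hz.2 hy.1,
    measure_mono_null (Set.Ico_subset_Ico_left hz.1) hx.2⟩

/-- Second Borel–Cantelli: for an i.i.d. sequence, any set of positive measure is hit
infinitely often, almost surely. -/
lemma freq_mem {Ω : Type*} [MeasureSpace Ω] [IsProbabilityMeasure (ℙ : Measure Ω)]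
    (X : ℕ → Ω → ℝ) (hX : ∀ i, Measurable (X i))
    (ν : Measure ℝ) (hiid : ∀ i, Measure.map (X i) ℙ = ν)
    (hindep : iIndepFun X ℙ)
    (I : Set ℝ) (hI : MeasurableSet I) (hνI : ν I ≠ 0) :
    ∀ᵐ ω ∂(ℙ : Measure Ω), ∃ᶠ j in atTop, X j ω ∈ I := by
  have hps : ∀ j, ℙ (X j ⁻¹' I) = ν I := fun j => by
    rw [← hiid j, Measure.map_apply (hX j) hI]
  have hmeas : ∀ j, MeasurableSet (X j ⁻¹' I) := fun j => (hX j) hI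
  have hset : iIndepSet (fun j => X j ⁻¹' I) ℙ := by
    rw [iIndepSet_iff_meas_biInter hmeas]
    intro s
    exact hindep.measure_inter_preimage_eq_mul s (fun i _ => hI)
  have hsum : (∑' n, ℙ (X n ⁻¹' I)) = ∞ := by
    simp only [hps]
    exact ENNReal.tsum_const_eq_top_of_ne_zero hνI
  have hone := measure_limsup_eq_one hmeas hset hsum
  have hml : MeasurableSet (limsup (fun j => X j ⁻¹' I) atTop) :=
    MeasurableSet.measurableSet_limsup hmeas
  have h0 : ℙ (limsup (fun j => X j ⁻¹' I) atTop)ᶜ = 0 := by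
    rw [measure_compl hml (measure_ne_top _ _), hone]
    simp
  filter_upwards [measure_eq_zero_iff_ae_notMem.mp h0] with ω hω
  have hmem : ω ∈ limsup (fun j => X j ⁻¹' I) atTop := not_not.mp hω
  exact mem_limsup_iff_frequently_mem.1 hmem

open scoped Classical in
/-- For an i.i.d. sequence `X 0, X 1, X 2, …`, the right nearest neighbor of `X 0`
among `X 1, …, X (n-1)` converges to `X 0` almost surely as `n → ∞`. -/
theorem stmt_9 {Ω : Type*} [MeasureSpace Ω] [IsProbabilityMeasure (ℙ : Measure Ω)]
    (X : ℕ → Ω → ℝ) (hX : ∀ i, Measurable (X i))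
    (ν : Measure ℝ) (hiid : ∀ i, Measure.map (X i) ℙ = ν)
    (hindep : iIndepFun X ℙ) :
    ∀ᵐ ω ∂(ℙ : Measure Ω),
      Tendsto (fun n =>
        if h : {v : ℝ | ∃ j, 1 ≤ j ∧ j < n ∧ X j ω = v ∧ X 0 ω ≤ v}.Nonempty
        then sInf {v : ℝ | ∃ j, 1 ≤ j ∧ j < n ∧ X j ω = v ∧ X 0 ω ≤ v}
        else X 0 ω)
        atTop (nhds (X 0 ω)) := by
  have hνp : IsProbabilityMeasure ν := by
    rw [← hiid 0]; exact Measure.isProbabilityMeasure_map (hX 0).aemeasurable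
  -- a.s. `X 0 ω` is not in the bad set
  have h1 : ∀ᵐ ω ∂(ℙ : Measure Ω),
      X 0 ω ∉ {x : ℝ | ∃ y, x < y ∧ ν (Set.Ico x y) = 0} := by
    have h0 : ℙ (X 0 ⁻¹' {x : ℝ | ∃ y, x < y ∧ ν (Set.Ico x y) = 0}) = 0 := by
      rw [← Measure.map_apply (hX 0) (badset_meas ν), hiid 0]
      exact badset_null ν
    exact measure_eq_zero_iff_ae_notMem.mp h0
  -- a.s. every rational interval of positive measure is hit infinitely often
  have h2 : ∀ᵐ ω ∂(ℙ : Measure Ω), ∀ r s : ℚ, ν (Set.Ico (r : ℝ) (s : ℝ)) ≠ 0 →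
      ∃ᶠ j in atTop, X j ω ∈ Set.Ico (r : ℝ) (s : ℝ) := by
    rw [ae_all_iff]; intro r
    rw [ae_all_iff]; intro s
    by_cases h : ν (Set.Ico (r : ℝ) (s : ℝ)) = 0
    · exact Filter.Eventually.of_forall fun ω hc => absurd h hc
    · exact (freq_mem X hX ν hiid hindep _ measurableSet_Ico h).mono fun ω h' _ => h'
  -- a.s. every atom is hit infinitely often
  have hAc : Set.Countable {a : ℝ | ν {a} ≠ 0} := by
    have := Measure.countable_meas_pos_of_disjoint_iUnion (μ := ν)
      (As := fun a : ℝ => {a}) (fun a => measurableSet_singleton a)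
      (fun a b hab => Set.disjoint_singleton.2 hab)
    refine this.mono fun a ha => ?_
    exact pos_iff_ne_zero.2 ha
  have h3 : ∀ᵐ ω ∂(ℙ : Measure Ω), ∀ a ∈ {a : ℝ | ν {a} ≠ 0},
      ∃ᶠ j in atTop, X j ω = a := by
    rw [ae_ball_iff hAc]
    intro a ha
    exact (freq_mem X hX ν hiid hindep _ (measurableSet_singleton a) ha).mono
      fun ω h' => h'.mono fun j hj => hj
  filter_upwards [h1, h2, h3] with ω hω1 hω2 hω3
  -- key claim: for every ε > 0 there is j ≥ 1 with X j ω ∈ [X 0 ω, X 0 ω + ε)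
  have key : ∀ ε : ℝ, 0 < ε → ∃ j, 1 ≤ j ∧ X 0 ω ≤ X j ω ∧ X j ω < X 0 ω + ε := by
    intro ε hε
    by_cases hatom : ν {X 0 ω} ≠ 0
    · obtain ⟨j, hj, hj1⟩ :=
        ((hω3 (X 0 ω) hatom).and_eventually (eventually_ge_atTop 1)).exists
      exact ⟨j, hj1, le_of_eq hj.symm, by rw [hj]; linarith⟩
    · push_neg at hatom
      have hxε : X 0 ω < X 0 ω + ε := by linarith
      obtain ⟨q, hq1, hq2⟩ := exists_rat_btwn hxε
      have hIco : ν (Set.Ico (X 0 ω) (q : ℝ)) ≠ 0 := by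
        intro hc
        exact hω1 ⟨(q : ℝ), hq1, hc⟩
      have hIoo : ν (Set.Ioo (X 0 ω) (q : ℝ)) ≠ 0 := by
        intro hc
        apply hIco
        refine measure_mono_null (fun z hz => ?_)
          (measure_union_null (hatom) hc)
        rcases eq_or_lt_of_le hz.1 with h | h
        · exact Or.inl h.symm
        · exact Or.inr ⟨h, hz.2⟩
      obtain ⟨r, hr⟩ : ∃ r : {r : ℚ // X 0 ω < (r : ℝ) ∧ (r : ℝ) < (q : ℝ)},
          ν (Set.Ico ((r : ℚ) : ℝ) (q : ℝ)) ≠ 0 := by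
        by_contra hc
        push_neg at hc
        apply hIoo
        refine measure_mono_null (fun z hz => ?_)
          (measure_iUnion_null (s := fun r : {r : ℚ // X 0 ω < (r : ℝ) ∧ (r : ℝ) < (q : ℝ)}
            => Set.Ico ((r : ℚ) : ℝ) (q : ℝ)) fun r => hc r)
        obtain ⟨p, hp1, hp2⟩ := exists_rat_btwn hz.1
        exact Set.mem_iUnion.2 ⟨⟨p, hp1, hp2.trans hz.2⟩, hp2.le, hz.2⟩
      obtain ⟨j, hj, hj1⟩ :=
        ((hω2 r q hr).and_eventually (eventually_ge_atTop 1)).exists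
      exact ⟨j, hj1, le_of_lt (lt_of_lt_of_le r.2.1 hj.1),
        lt_trans hj.2 hq2⟩
  -- conclude the convergence
  rw [Metric.tendsto_atTop]
  intro ε hε
  obtain ⟨j, hj1, hjx, hjε⟩ := key ε hε
  refine ⟨j + 1, fun n hn => ?_⟩
  have hjn : j < n := lt_of_lt_of_le (Nat.lt_succ_self j) hn
  have hne : {v : ℝ | ∃ k, 1 ≤ k ∧ k < n ∧ X k ω = v ∧ X 0 ω ≤ v}.Nonempty :=
    ⟨X j ω, j, hj1, hjn, rfl, hjx⟩
  rw [dif_pos hne]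
  have hlbd : ∀ v ∈ {v : ℝ | ∃ k, 1 ≤ k ∧ k < n ∧ X k ω = v ∧ X 0 ω ≤ v}, X 0 ω ≤ v := by
    rintro v ⟨k, _, _, rfl, hv⟩
    exact hv
  have hlb : X 0 ω ≤ sInf {v : ℝ | ∃ k, 1 ≤ k ∧ k < n ∧ X k ω = v ∧ X 0 ω ≤ v} :=
    le_csInf hne hlbd
  have hub : sInf {v : ℝ | ∃ k, 1 ≤ k ∧ k < n ∧ X k ω = v ∧ X 0 ω ≤ v} ≤ X j ω :=
    csInf_le ⟨X 0 ω, hlbd⟩ ⟨j, hj1, hjn, rfl, hjx⟩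
  rw [Real.dist_eq, abs_of_nonneg (sub_nonneg.2 hlb)]
  linarith
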